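/- arXiv:1605.00627 — 3 statements merged into one kernel-verified Lean document; each statement's English description precedes it below -/
import Mathlib

section
/- Let (Ω, μ) be a probability space, n a positive integer, A_c, A_o n×n real matrices, and P an n×n real symmetric matrix. Let ρ ∈ ℝ and θ ∈ [0,1] be such that ρ·P − θ·(A_cᵀ P A_c) − (1−θ)·(A_oᵀ P A_o) is positive semidefinite. Let x : Ω → ℝⁿ have square-integrable components, let γ : Ω → {0,1} be measurable with μ(γ = 1) = θ, and let w : Ω → ℝⁿ have square-integrable components with ∫ w_i dμ = 0 and covariance entries W_{ij} = ∫ w_i w_j dμ. Assume that the pair (γ, w) is independent of x, and that γ is independent of w. Then, writing A(ω) = A_c if γ(ω) = 1 and A(ω) = A_o otherwise, ∫ (A(ω)x(ω) + w(ω))ᵀ P (A(ω)x(ω) + w(ω)) dμ(ω) ≤ ρ · ∫ x(ω)ᵀ P x(ω) dμ(ω) + trace(P·W). -/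
open Matrix MeasureTheory ProbabilityTheory

section Aux

variable {Ω : Type*} [MeasurableSpace Ω] {μ : Measure Ω}

lemma aux_l2_mul_integrable {f g : Ω → ℝ} (hf : MemLp f 2 μ) (hg : MemLp g 2 μ) :
    Integrable (fun ω => f ω * g ω) μ := by
  have h : MemLp (f • g) 1 μ :=
    hg.smul hf
  exact memLp_one_iff_integrable.mp h

lemma aux_ite_memℒp_top {γ : Ω → Bool} (hγ : Measurable γ) (a b : ℝ) :
    MemLp (fun ω => if γ ω then a else b) ⊤ μ := by
  refine memLp_top_of_bound ?_ (max ‖a‖ ‖b‖) (Filter.Eventually.of_forall fun ω => ?_)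
  · exact ((Measurable.ite (hγ (measurableSet_singleton true)) measurable_const
      measurable_const)).aestronglyMeasurable
  · by_cases h : γ ω <;> simp [h, le_max_left, le_max_right]

lemma aux_ite_mul_memℒ2 {γ : Ω → Bool} (hγ : Measurable γ) (a b : ℝ)
    {g : Ω → ℝ} (hg : MemLp g 2 μ) :
    MemLp (fun ω => (if γ ω then a else b) * g ω) 2 μ :=
  hg.smul (aux_ite_memℒp_top hγ a b)

lemma aux_integral_ite [IsProbabilityMeasure μ] {γ : Ω → Bool} (hγ : Measurable γ) (a b : ℝ) :
    ∫ ω, (if γ ω then a else b) ∂μ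
      = (μ {ω | γ ω = true}).toReal * a + (1 - (μ {ω | γ ω = true}).toReal) * b := by
  have hS : MeasurableSet {ω | γ ω = true} := hγ (measurableSet_singleton true)
  have h1 : (fun ω => if γ ω then a else b)
      = fun ω => Set.indicator {ω | γ ω = true} (fun _ => a - b) ω + b := by
    funext ω; by_cases h : γ ω <;> simp [h]
  rw [h1, integral_add ((integrable_const (a - b)).indicator hS) (integrable_const b),
    integral_indicator_const _ hS, integral_const]
  simp only [smul_eq_mul, Measure.real, measure_univ, ENNReal.toReal_one, one_mul]
  ring

lemma dot_mulVec_eq_sum {n : ℕ} (B : Matrix (Fin n) (Fin n) ℝ) (u v : Fin n → ℝ) :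
    u ⬝ᵥ B *ᵥ v = ∑ i, ∑ k, B i k * (u i * v k) := by
  simp only [dotProduct, mulVec, Finset.mul_sum]
  exact Finset.sum_congr rfl fun i _ => Finset.sum_congr rfl fun k _ => by ring

lemma quad_expand {n : ℕ} (A P : Matrix (Fin n) (Fin n) ℝ) (hP : P.IsSymm) (u v : Fin n → ℝ) :
    (A *ᵥ u + v) ⬝ᵥ P *ᵥ (A *ᵥ u + v)
      = u ⬝ᵥ (Aᵀ * P * A) *ᵥ u + 2 * (v ⬝ᵥ (P * A) *ᵥ u) + v ⬝ᵥ P *ᵥ v := by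
  have hAu : A *ᵥ u = u ᵥ* Aᵀ := (vecMul_transpose A u).symm
  have hT1 : (A *ᵥ u) ⬝ᵥ P *ᵥ (A *ᵥ u) = u ⬝ᵥ (Aᵀ * P * A) *ᵥ u := by
    rw [mulVec_mulVec, dotProduct_mulVec, hAu, vecMul_vecMul, ← dotProduct_mulVec,
      ← Matrix.mul_assoc]
  have hT2 : (A *ᵥ u) ⬝ᵥ P *ᵥ v = v ⬝ᵥ (P * A) *ᵥ u := by
    rw [dotProduct_mulVec, hAu, vecMul_vecMul, dotProduct_comm, dotProduct_mulVec,
      ← mulVec_transpose, transpose_mul, transpose_transpose, hP.eq, ← dotProduct_mulVec]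
  have hT3 : v ⬝ᵥ P *ᵥ (A *ᵥ u) = v ⬝ᵥ (P * A) *ᵥ u := by rw [mulVec_mulVec]
  rw [mulVec_add, dotProduct_add, add_dotProduct, add_dotProduct, hT1, hT2, hT3]
  ring

end Aux

/-- If `θ` satisfies the LMI
`ρ•P - θ•(A_cᵀPA_c) - (1-θ)•(A_oᵀPA_o) ⪰ 0`, then the one-step expected value of the
quadratic Lyapunov function of the switched system is bounded:
`E[(A x + w)ᵀ P (A x + w)] ≤ ρ · E[xᵀ P x] + trace(P·W)`. -/
theorem stmt_4 (Ω : Type*) [MeasurableSpace Ω] (μ : Measure Ω) [IsProbabilityMeasure μ]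
    (n : ℕ) (hn : 0 < n) (Ac Ao P : Matrix (Fin n) (Fin n) ℝ) (hP : P.IsSymm)
    (ρ θ : ℝ) (hθ0 : 0 ≤ θ) (hθ1 : θ ≤ 1)
    (hLMI : (ρ • P - θ • (Acᵀ * P * Ac) - (1 - θ) • (Aoᵀ * P * Ao)).PosSemidef)
    (x : Ω → (Fin n → ℝ)) (hx : Measurable x)
    (hx2 : ∀ i, MemLp (fun ω => x ω i) 2 μ)
    (γ : Ω → Bool) (hγ : Measurable γ)
    (hθ : (μ {ω | γ ω = true}).toReal = θ)
    (w : Ω → (Fin n → ℝ)) (hw : Measurable w)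
    (hw2 : ∀ i, MemLp (fun ω => w ω i) 2 μ)
    (hmean : ∀ i, ∫ ω, w ω i ∂μ = 0)
    (W : Matrix (Fin n) (Fin n) ℝ)
    (hW : ∀ i j, W i j = ∫ ω, w ω i * w ω j ∂μ)
    (hindep_pair : IndepFun (fun ω => (γ ω, w ω)) x μ)
    (hindep : IndepFun γ w μ) :
    ∫ ω, ((if γ ω then Ac else Ao).mulVec (x ω) + w ω) ⬝ᵥ
          P.mulVec ((if γ ω then Ac else Ao).mulVec (x ω) + w ω) ∂μ
      ≤ ρ * ∫ ω, x ω ⬝ᵥ P.mulVec (x ω) ∂μ + (P * W).trace := by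
  classical
  set Nc := Acᵀ * P * Ac with hNc
  set No := Aoᵀ * P * Ao with hNo
  set M := θ • Nc + (1 - θ) • No with hM
  -- measurability of coordinates
  have hxm : ∀ i : Fin n, Measurable fun ω => x ω i := fun i => (measurable_pi_apply i).comp hx
  have hwm : ∀ i : Fin n, Measurable fun ω => w ω i := fun i => (measurable_pi_apply i).comp hw
  -- integrable products
  have hxx : ∀ i k : Fin n, Integrable (fun ω => x ω i * x ω k) μ :=
    fun i k => aux_l2_mul_integrable (hx2 i) (hx2 k)
  have hww : ∀ i k : Fin n, Integrable (fun ω => w ω i * w ω k) μ :=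
    fun i k => aux_l2_mul_integrable (hw2 i) (hw2 k)
  have hitewx : ∀ (c d : ℝ) (i k : Fin n),
      Integrable (fun ω => (if γ ω then c else d) * (w ω i * x ω k)) μ := by
    intro c d i k
    have h := aux_l2_mul_integrable (aux_ite_mul_memℒ2 hγ c d (hw2 i)) (hx2 k)
    have he : (fun ω => ((if γ ω then c else d) * w ω i) * x ω k)
        = fun ω => (if γ ω then c else d) * (w ω i * x ω k) := by
      funext ω; ring
    rwa [he] at h
  have hitexx : ∀ (c d : ℝ) (i k : Fin n),
      Integrable (fun ω => (if γ ω then c else d) * (x ω i * x ω k)) μ := by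
    intro c d i k
    refine (hxx i k).bdd_mul (c := max ‖c‖ ‖d‖) ?_ (Filter.Eventually.of_forall fun ω => ?_)
    · exact ((Measurable.ite (hγ (measurableSet_singleton true)) measurable_const
        measurable_const)).aestronglyMeasurable
    · by_cases h : γ ω <;> simp [h, le_max_left, le_max_right]
  -- cross terms vanish
  have hγw : ∀ (c d : ℝ) (i : Fin n), ∫ ω, (if γ ω then c else d) * w ω i ∂μ = 0 := by
    intro c d i
    have hφ : Measurable (fun b : Bool => if b then c else d) := measurable_from_top
    have hI : IndepFun (fun ω => if γ ω then c else d) (fun ω => w ω i) μ :=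
      hindep.comp hφ (measurable_pi_apply i)
    calc ∫ ω, (if γ ω then c else d) * w ω i ∂μ
        = (∫ ω, (if γ ω then c else d) ∂μ) * ∫ ω, w ω i ∂μ :=
          hI.integral_fun_mul_eq_mul_integral ((Measurable.ite (hγ (measurableSet_singleton true)) measurable_const
            measurable_const).aestronglyMeasurable) ((hwm i).aestronglyMeasurable)
      _ = 0 := by rw [hmean i, mul_zero]
  have hcross : ∀ (c d : ℝ) (i k : Fin n),
      ∫ ω, (if γ ω then c else d) * (w ω i * x ω k) ∂μ = 0 := by
    intro c d i k
    have hφ : Measurable (fun p : Bool × (Fin n → ℝ) => (if p.1 then c else d) * p.2 i) := by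
      refine Measurable.mul ?_ ((measurable_pi_apply i).comp measurable_snd)
      exact Measurable.ite (measurable_fst (measurableSet_singleton true)) measurable_const
        measurable_const
    have hI : IndepFun (fun ω => (if γ ω then c else d) * w ω i) (fun ω => x ω k) μ :=
      hindep_pair.comp hφ (measurable_pi_apply k)
    have he : (fun ω => (if γ ω then c else d) * (w ω i * x ω k))
        = fun ω => ((if γ ω then c else d) * w ω i) * x ω k := by
      funext ω; ring
    rw [he]
    calc ∫ ω, ((if γ ω then c else d) * w ω i) * x ω k ∂μ
        = (∫ ω, (if γ ω then c else d) * w ω i ∂μ) * ∫ ω, x ω k ∂μ :=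
          hI.integral_fun_mul_eq_mul_integral ((aux_ite_mul_memℒ2 hγ c d (hw2 i)).aestronglyMeasurable)
            ((hxm k).aestronglyMeasurable)
      _ = 0 := by rw [hγw c d i, zero_mul]
  -- expectation of the γ-dependent quadratic coefficient
  have hAterm : ∀ (c d : ℝ) (i k : Fin n),
      ∫ ω, (if γ ω then c else d) * (x ω i * x ω k) ∂μ
        = (θ * c + (1 - θ) * d) * ∫ ω, x ω i * x ω k ∂μ := by
    intro c d i k
    have hφ : Measurable (fun p : Bool × (Fin n → ℝ) => if p.1 then c else d) :=
      Measurable.ite (measurable_fst (measurableSet_singleton true)) measurable_const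
        measurable_const
    have hψ : Measurable (fun v : Fin n → ℝ => v i * v k) :=
      (measurable_pi_apply i).mul (measurable_pi_apply k)
    have hI : IndepFun (fun ω => if γ ω then c else d) (fun ω => x ω i * x ω k) μ :=
      hindep_pair.comp hφ hψ
    calc ∫ ω, (if γ ω then c else d) * (x ω i * x ω k) ∂μ
        = (∫ ω, (if γ ω then c else d) ∂μ) * ∫ ω, x ω i * x ω k ∂μ :=
          hI.integral_fun_mul_eq_mul_integral ((Measurable.ite (hγ (measurableSet_singleton true)) measurable_const
            measurable_const).aestronglyMeasurable) (((hxm i).mul (hxm k)).aestronglyMeasurable)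
      _ = _ := by rw [aux_integral_ite hγ, hθ]
  -- pointwise expansion of the integrand
  have hpt : ∀ ω, ((if γ ω then Ac else Ao) *ᵥ x ω + w ω) ⬝ᵥ
        P *ᵥ ((if γ ω then Ac else Ao) *ᵥ x ω + w ω)
      = (∑ i, ∑ k, (if γ ω then Nc i k else No i k) * (x ω i * x ω k))
        + 2 * (∑ i, ∑ k, (if γ ω then (P * Ac) i k else (P * Ao) i k) * (w ω i * x ω k))
        + ∑ i, ∑ k, P i k * (w ω i * w ω k) := by
    intro ω
    by_cases h : γ ω = true
    · simp only [if_pos h]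
      rw [quad_expand _ P hP, dot_mulVec_eq_sum, dot_mulVec_eq_sum, dot_mulVec_eq_sum]
    · simp only [if_neg h]
      rw [quad_expand _ P hP, dot_mulVec_eq_sum, dot_mulVec_eq_sum, dot_mulVec_eq_sum]
  -- integrability of the three pieces
  have hint_a : Integrable
      (fun ω => ∑ i, ∑ k, (if γ ω then Nc i k else No i k) * (x ω i * x ω k)) μ :=
    integrable_finset_sum _ fun i _ => integrable_finset_sum _ fun k _ => hitexx _ _ i k
  have hint_c : Integrable
      (fun ω => ∑ i, ∑ k, (if γ ω then (P * Ac) i k else (P * Ao) i k) * (w ω i * x ω k)) μ :=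
    integrable_finset_sum _ fun i _ => integrable_finset_sum _ fun k _ => hitewx _ _ i k
  have hint_w : Integrable (fun ω => ∑ i, ∑ k, P i k * (w ω i * w ω k)) μ :=
    integrable_finset_sum _ fun i _ => integrable_finset_sum _ fun k _ => (hww i k).const_mul _
  -- values of the three pieces
  have hVa : ∫ ω, ∑ i, ∑ k, (if γ ω then Nc i k else No i k) * (x ω i * x ω k) ∂μ
      = ∫ ω, x ω ⬝ᵥ M *ᵥ x ω ∂μ := by
    have hMint : Integrable (fun ω => ∑ i, ∑ k, M i k * (x ω i * x ω k)) μ :=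
      integrable_finset_sum _ fun i _ => integrable_finset_sum _ fun k _ =>
        (hxx i k).const_mul _
    have hrw : ∫ ω, x ω ⬝ᵥ M *ᵥ x ω ∂μ = ∫ ω, ∑ i, ∑ k, M i k * (x ω i * x ω k) ∂μ :=
      integral_congr_ae (Filter.Eventually.of_forall fun ω => dot_mulVec_eq_sum M _ _)
    rw [hrw,
      integral_finset_sum _ fun i _ => integrable_finset_sum _ fun k _ => hitexx (Nc i k) (No i k) i k,
      integral_finset_sum _ fun i _ => integrable_finset_sum _ fun k _ => (hxx i k).const_mul (M i k)]
    refine Finset.sum_congr rfl fun i _ => ?_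
    rw [integral_finset_sum _ fun k _ => hitexx (Nc i k) (No i k) i k,
      integral_finset_sum _ fun k _ => (hxx i k).const_mul (M i k)]
    refine Finset.sum_congr rfl fun k _ => ?_
    rw [hAterm (Nc i k) (No i k) i k, integral_const_mul, hM]
    simp [Matrix.add_apply, Matrix.smul_apply, smul_eq_mul]
  have hVc : ∫ ω, ∑ i, ∑ k, (if γ ω then (P * Ac) i k else (P * Ao) i k) * (w ω i * x ω k) ∂μ
      = 0 := by
    rw [integral_finset_sum _ fun i _ => integrable_finset_sum _ fun k _ => hitewx ((P * Ac) i k) ((P * Ao) i k) i k]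
    refine Finset.sum_eq_zero fun i _ => ?_
    rw [integral_finset_sum _ fun k _ => hitewx ((P * Ac) i k) ((P * Ao) i k) i k]
    exact Finset.sum_eq_zero fun k _ => hcross _ _ i k
  have hVw : ∫ ω, ∑ i, ∑ k, P i k * (w ω i * w ω k) ∂μ = (P * W).trace := by
    rw [integral_finset_sum _ fun i _ => integrable_finset_sum _ fun k _ =>
      (hww i k).const_mul (P i k)]
    have htr : (P * W).trace = ∑ i, ∑ k, P i k * W k i := by
      simp [Matrix.trace, Matrix.diag, Matrix.mul_apply]
    rw [htr]
    refine Finset.sum_congr rfl fun i _ => ?_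
    rw [integral_finset_sum _ fun k _ => (hww i k).const_mul (P i k)]
    refine Finset.sum_congr rfl fun k _ => ?_
    rw [integral_const_mul]
    congr 1
    rw [hW k i]
    exact integral_congr_ae (Filter.Eventually.of_forall fun ω => mul_comm _ _)
  -- the LMI step
  have hMint : Integrable (fun ω => x ω ⬝ᵥ M *ᵥ x ω) μ := by
    have h : Integrable (fun ω => ∑ i, ∑ k, M i k * (x ω i * x ω k)) μ :=
      integrable_finset_sum _ fun i _ => integrable_finset_sum _ fun k _ =>
        (hxx i k).const_mul _
    exact h.congr (Filter.Eventually.of_forall fun ω => (dot_mulVec_eq_sum M _ _).symm)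
  have hPint : Integrable (fun ω => x ω ⬝ᵥ P *ᵥ x ω) μ := by
    have h : Integrable (fun ω => ∑ i, ∑ k, P i k * (x ω i * x ω k)) μ :=
      integrable_finset_sum _ fun i _ => integrable_finset_sum _ fun k _ =>
        (hxx i k).const_mul _
    exact h.congr (Filter.Eventually.of_forall fun ω => (dot_mulVec_eq_sum P _ _).symm)
  have hmono : ∫ ω, x ω ⬝ᵥ M *ᵥ x ω ∂μ ≤ ρ * ∫ ω, x ω ⬝ᵥ P *ᵥ x ω ∂μ := by
    rw [← integral_const_mul]
    refine integral_mono hMint (hPint.const_mul ρ) fun ω => ?_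
    have h0 := hLMI.dotProduct_mulVec_nonneg (x ω)
    have hMeq : ρ • P - θ • Nc - (1 - θ) • No = ρ • P - M := by
      rw [hM, sub_add_eq_sub_sub]
    rw [hMeq, star_trivial] at h0
    have hexp : x ω ⬝ᵥ (ρ • P - M) *ᵥ x ω
        = ρ * (x ω ⬝ᵥ P *ᵥ x ω) - x ω ⬝ᵥ M *ᵥ x ω := by
      rw [sub_mulVec, dotProduct_sub, smul_mulVec, dotProduct_smul, smul_eq_mul]
    rw [hexp] at h0
    linarith
  -- put everything together
  have hsplit : ∫ ω, ((if γ ω then Ac else Ao) *ᵥ x ω + w ω) ⬝ᵥ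
        P *ᵥ ((if γ ω then Ac else Ao) *ᵥ x ω + w ω) ∂μ
      = (∫ ω, ∑ i, ∑ k, (if γ ω then Nc i k else No i k) * (x ω i * x ω k) ∂μ)
        + 2 * (∫ ω, ∑ i, ∑ k, (if γ ω then (P * Ac) i k else (P * Ao) i k)
            * (w ω i * x ω k) ∂μ)
        + ∫ ω, ∑ i, ∑ k, P i k * (w ω i * w ω k) ∂μ := by
    have h1 : Integrable (fun ω =>
        (∑ i, ∑ k, (if γ ω then Nc i k else No i k) * (x ω i * x ω k))
          + 2 * ∑ i, ∑ k, (if γ ω then (P * Ac) i k else (P * Ao) i k) * (w ω i * x ω k)) μ :=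
      hint_a.add (hint_c.const_mul 2)
    rw [integral_congr_ae (Filter.Eventually.of_forall hpt),
      integral_add h1 hint_w, integral_add hint_a (hint_c.const_mul 2), integral_const_mul]
  rw [hsplit, hVa, hVc, hVw]
  linarith
end

section
/- Let (X, μ) be a measure space with μ a finite measure, and let f : X → ℝ be integrable with μ({h : f(h) = 0}) = 0. If a measurable function α : X → ℝ with 0 ≤ α(h) ≤ 1 for all h satisfies ∫ α(h)·f(h) dμ(h) = ∫ min(f(h), 0) dμ(h), then α(h) = 1_{{f < 0}}(h) for μ-almost every h, where 1_{{f < 0}} is the indicator function of the set {h : f(h) < 0}. -/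
open MeasureTheory

/-- If `μ({f = 0}) = 0` and a measurable `α : X → [0,1]` achieves
`∫ α·f dμ = ∫ min(f,0) dμ`, then `α` equals the indicator of `{f < 0}` μ-a.e. -/
theorem stmt_7 (X : Type*) [MeasurableSpace X] (μ : Measure X) [IsFiniteMeasure μ]
    (f : X → ℝ) (hf : Integrable f μ) (hzero : μ {h | f h = 0} = 0)
    (α : X → ℝ) (hα : Measurable α) (hα0 : ∀ h, 0 ≤ α h) (hα1 : ∀ h, α h ≤ 1)
    (heq : ∫ h, α h * f h ∂μ = ∫ h, min (f h) 0 ∂μ) :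
    ∀ᵐ h ∂μ, α h = Set.indicator {h | f h < 0} (fun _ => (1 : ℝ)) h := by
  have hαf : Integrable (fun h => α h * f h) μ := by
    refine hf.bdd_mul hα.aestronglyMeasurable (c := 1) (ae_of_all _ fun h => ?_)
    rw [Real.norm_eq_abs, abs_of_nonneg (hα0 h)]; exact hα1 h
  have hmin : Integrable (fun h => min (f h) 0) μ := hf.inf (integrable_const 0)
  set g : X → ℝ := fun h => α h * f h - min (f h) 0 with hg
  have hgnn : ∀ h, 0 ≤ g h := by
    intro h
    rcases le_or_gt 0 (f h) with hfh | hfh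
    · simp only [hg, min_eq_right hfh, sub_zero]
      exact mul_nonneg (hα0 h) hfh
    · simp only [hg, min_eq_left hfh.le]
      have : 0 ≤ (1 - α h) * (-f h) := mul_nonneg (by linarith [hα1 h]) (by linarith)
      nlinarith
  have hgint : Integrable g μ := hαf.sub hmin
  have hzero' : ∫ h, g h ∂μ = 0 := by
    rw [integral_sub hαf hmin, heq, sub_self]
  have hgae : g =ᵐ[μ] 0 := by
    exact (integral_eq_zero_iff_of_nonneg (fun h => hgnn h) hgint).mp hzero'
  have hfne : ∀ᵐ h ∂μ, f h ≠ 0 := by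
    rw [ae_iff]
    simpa using hzero
  filter_upwards [hgae, hfne] with h hg0 hfh
  simp only [Pi.zero_apply, hg] at hg0
  rcases lt_trichotomy (f h) 0 with hlt | heq0 | hgt
  · rw [Set.indicator_of_mem (by exact hlt)]
    rw [min_eq_left hlt.le] at hg0
    have : (α h - 1) * f h = 0 := by linarith
    rcases mul_eq_zero.mp this with h1 | h2
    · linarith
    · exact absurd h2 hfh
  · exact absurd heq0 hfh
  · rw [Set.indicator_of_notMem (by simp [Set.mem_setOf_eq, not_lt, hgt.le])]
    rw [min_eq_right hgt.le, sub_zero] at hg0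
    rcases mul_eq_zero.mp hg0 with h1 | h2
    · exact h1
    · exact absurd h2 hfh
end

section
/- Let μ be a probability measure on ℝ with no atoms (μ({x}) = 0 for all x), let q : ℝ → ℝ be strictly increasing, continuous, and taking values in [0,1], and let ν > 0, p > 0, s ≥ 0 be real numbers. Define α* : ℝ → ℝ by α*(h) = 1 if ν·q(h) ≥ p + s and α*(h) = 0 otherwise. Then: (i) for every measurable α : ℝ → ℝ with 0 ≤ α(h) ≤ 1 for all h, ∫ α*(h)·(p + s − ν·q(h)) dμ(h) ≤ ∫ α(h)·(p + s − ν·q(h)) dμ(h); (ii) if a measurable α : ℝ → [0,1] attains equality in (i), then α(h) = α*(h) for μ-almost every h. -/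
open MeasureTheory

/-- Lemma 1 for a single sensor. The threshold policy
`α*(h) = 1` if `ν·q(h) ≥ p + s`, else `0`, (i) minimizes the Lagrangian term
`∫ α(h)·(p + s - ν·q(h)) dμ` over measurable `α : ℝ → [0,1]`, and (ii) any such
minimizer coincides with `α*` μ-almost everywhere. -/
theorem stmt_9 (μ : Measure ℝ) [IsProbabilityMeasure μ]
    (hatom : ∀ x : ℝ, μ {x} = 0)
    (q : ℝ → ℝ) (hq : StrictMono q) (hqc : Continuous q)
    (hq01 : ∀ h, q h ∈ Set.Icc (0 : ℝ) 1)
    (ν p s : ℝ) (hν : 0 < ν) (hp : 0 < p) (hs : 0 ≤ s) :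
    (∀ α : ℝ → ℝ, Measurable α → (∀ h, 0 ≤ α h) → (∀ h, α h ≤ 1) →
      ∫ h, (if p + s ≤ ν * q h then (1 : ℝ) else 0) * (p + s - ν * q h) ∂μ ≤
        ∫ h, α h * (p + s - ν * q h) ∂μ) ∧
    (∀ α : ℝ → ℝ, Measurable α → (∀ h, 0 ≤ α h) → (∀ h, α h ≤ 1) →
      (∫ h, α h * (p + s - ν * q h) ∂μ =
        ∫ h, (if p + s ≤ ν * q h then (1 : ℝ) else 0) * (p + s - ν * q h) ∂μ) →
      ∀ᵐ h ∂μ, α h = if p + s ≤ ν * q h then (1 : ℝ) else 0) := by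
  set g : ℝ → ℝ := fun h => p + s - ν * q h with hg
  have hgmeas : Measurable g := (measurable_const.sub ((hqc.measurable).const_mul ν))
  have hgbound : ∀ h, |g h| ≤ p + s + ν := by
    intro h
    have h0 := (hq01 h).1
    have h1 := (hq01 h).2
    have h2 : ν * q h ≤ ν := by nlinarith
    have h3 : 0 ≤ ν * q h := mul_nonneg hν.le h0
    rw [abs_le]
    constructor <;> simp only [hg] <;> linarith
  -- integrability of α·g for bounded measurable α
  have hint : ∀ α : ℝ → ℝ, Measurable α → (∀ h, 0 ≤ α h) → (∀ h, α h ≤ 1) →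
      Integrable (fun h => α h * g h) μ := by
    intro α hm h0 h1
    refine Integrable.mono' (integrable_const (p + s + ν)) ((hm.mul hgmeas).aestronglyMeasurable) ?_
    filter_upwards with h
    have : |α h * g h| ≤ |g h| := by
      rw [abs_mul]
      have : |α h| ≤ 1 := by rw [abs_le]; exact ⟨by linarith [h0 h], h1 h⟩
      nlinarith [abs_nonneg (g h), abs_nonneg (α h)]
    calc ‖α h * g h‖ = |α h * g h| := rfl
      _ ≤ |g h| := this
      _ ≤ p + s + ν := hgbound h
  have hsm : Measurable (fun h => if p + s ≤ ν * q h then (1 : ℝ) else 0) := by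
    exact Measurable.ite (measurableSet_le measurable_const ((hqc.measurable).const_mul ν))
      measurable_const measurable_const
  have hs0 : ∀ h, 0 ≤ (if p + s ≤ ν * q h then (1 : ℝ) else 0) := by
    intro h; split <;> norm_num
  have hs1 : ∀ h, (if p + s ≤ ν * q h then (1 : ℝ) else 0) ≤ 1 := by
    intro h; split <;> norm_num
  -- pointwise minimality
  have hpt : ∀ (α : ℝ → ℝ), (∀ h, 0 ≤ α h) → (∀ h, α h ≤ 1) → ∀ h,
      (if p + s ≤ ν * q h then (1 : ℝ) else 0) * g h ≤ α h * g h := by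
    intro α h0 h1 h
    by_cases hc : p + s ≤ ν * q h
    · simp only [hc, if_pos, one_mul]
      have : g h ≤ 0 := by simp only [hg]; linarith
      nlinarith [h1 h]
    · simp only [hc, if_neg, not_false_iff, zero_mul]
      have : 0 ≤ g h := by
        simp only [hg]; push_neg at hc; linarith
      exact mul_nonneg (h0 h) this
  constructor
  · intro α hm h0 h1
    exact integral_mono (hint _ hsm hs0 hs1) (hint _ hm h0 h1) (hpt α h0 h1)
  · intro α hm h0 h1 heq
    have hi1 := hint _ hm h0 h1
    have hi2 := hint _ hsm hs0 hs1
    have hnn : 0 ≤ᵐ[μ] fun h => α h * g h - (if p + s ≤ ν * q h then (1 : ℝ) else 0) * g h := by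
      filter_upwards with h
      simpa using hpt α h0 h1 h
    have hiz : ∫ h, (α h * g h - (if p + s ≤ ν * q h then (1 : ℝ) else 0) * g h) ∂μ = 0 := by
      rw [integral_sub hi1 hi2]
      simp only [hg]
      rw [heq, sub_self]
    have hdiff := (integral_eq_zero_iff_of_nonneg_ae hnn (hi1.sub hi2)).mp hiz
    have hnull : μ {h : ℝ | ν * q h = p + s} = 0 := by
      rcases Set.eq_empty_or_nonempty {h : ℝ | ν * q h = p + s} with he | ⟨x, hx⟩
      · simp [he]
      · have hsub : {h : ℝ | ν * q h = p + s} ⊆ {x} := by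
          intro y hy
          have : q y = q x := by
            have := hy.trans hx.symm
            exact mul_left_cancel₀ hν.ne' this
          exact hq.injective this
        exact measure_mono_null hsub (hatom x)
    have hne : ∀ᵐ h ∂μ, ν * q h ≠ p + s := by
      rw [ae_iff]
      simpa using hnull
    filter_upwards [hdiff, hne] with h hd hn
    simp only [Pi.zero_apply] at hd
    have hgne : g h ≠ 0 := fun hc => hn (by simp only [hg] at hc; linarith)
    have : α h * g h = (if p + s ≤ ν * q h then (1 : ℝ) else 0) * g h := by linarith [hd]
    exact mul_right_cancel₀ hgne this
end
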